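/- For n ≥ m ≥ 1 and η ∈ {+,-}, the type B Jones–Wenzl projectors satisfy the absorption rule b_{n,η,ε}·b_{m,η,ε} = b_{n,η,ε} = b_{m,η,ε}·b_{n,η,ε}, where b_{m,η,ε} is included into TL(B_n)_ε via the first m strands. -/

import Mathlib

/-! Box absorption for the type `B` Jones–Wenzl projectors:
`b_{n,η,ε} b_{m,η,ε} = b_{n,η,ε} = b_{m,η,ε} b_{n,η,ε}` for `n ≥ m ≥ 1`. -/

noncomputable section

abbrev Kq : Type := RatFunc ℂ

def qq : Kq := RatFunc.X

/-- The quantum integer `[m] = (q^m - q^{-m})/(q - q⁻¹)` in `ℂ(q)`. -/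
def qint (m : ℤ) : Kq := (qq ^ m - qq ^ (-m)) / (qq - qq⁻¹)

/-- Generators of the type `B` Temperley–Lieb algebra: `none` is `s₀`, and
`some i` is the cup-cap generator `U_{i+1}`. -/
def g : Option ℕ → FreeAlgebra Kq (Option ℕ) := FreeAlgebra.ι Kq

/-- The defining relations of the (specialized) type `B` Temperley–Lieb
algebra (on infinitely many strands, so that `TL(B_n)` sits inside for
every `n`): `U_i² = -ε(q+q⁻¹)U_i`, distant commutativity,
`U_i U_{i±1} U_i = U_i`, `s₀² = 1`, `U₁ s₀ U₁ = 0` and `s₀ U_i = U_i s₀`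
for `i ≥ 2`.  (Recall `some i` stands for `U_{i+1}`.) -/
inductive TLBRel (ε : Kq) : FreeAlgebra Kq (Option ℕ) → FreeAlgebra Kq (Option ℕ) → Prop
  | Usq (i : ℕ) :
      TLBRel ε (g (some i) * g (some i)) ((-(ε * (qq + qq⁻¹))) • g (some i))
  | Ucomm (i j : ℕ) (h : i + 2 ≤ j) :
      TLBRel ε (g (some i) * g (some j)) (g (some j) * g (some i))
  | Ubraid1 (i : ℕ) :
      TLBRel ε (g (some i) * g (some (i+1)) * g (some i)) (g (some i))
  | Ubraid2 (i : ℕ) :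
      TLBRel ε (g (some (i+1)) * g (some i) * g (some (i+1))) (g (some (i+1)))
  | s0sq : TLBRel ε (g none * g none) 1
  | UsU : TLBRel ε (g (some 0) * g none * g (some 0)) 0
  | scomm (i : ℕ) (h : 1 ≤ i) :
      TLBRel ε (g none * g (some i)) (g (some i) * g none)

/-- The (specialized) type `B` Temperley–Lieb algebra `TL(B)_ε` (on
infinitely many strands). -/
abbrev TLB (ε : Kq) := RingQuot (TLBRel ε)

/-- The generator `s₀` of `TL(B)_ε`. -/
def s0 (ε : Kq) : TLB ε := RingQuot.mkAlgHom Kq (TLBRel ε) (g none)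

/-- The generator `U_i` of `TL(B)_ε`, for `i ≥ 1`. -/
def UU (ε : Kq) (i : ℕ) : TLB ε := RingQuot.mkAlgHom Kq (TLBRel ε) (g (some (i - 1)))

/-- The subalgebra `TL(B_n)_ε ⊆ TL(B)_ε`, generated by `s₀, U₁, …, U_{n-1}`. -/
def TLBsub (ε : Kq) (n : ℕ) : Subalgebra Kq (TLB ε) :=
  Algebra.adjoin Kq ({s0 ε} ∪ {x | ∃ i, 1 ≤ i ∧ i ≤ n - 1 ∧ x = UU ε i})

/-- The type `D` generators: `UD 0 = U₀ = s₀U₁s₀` and `UD i = U_i` for `i ≥ 1`. -/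
def UD (ε : Kq) (i : ℕ) : TLB ε :=
  if i = 0 then s0 ε * UU ε 1 * s0 ε else UU ε i

/-- The subalgebra `TL(D_n)_ε ⊆ TL(B)_ε`, generated by `U₀, U₁, …, U_{n-1}`. -/
def TLDsub (ε : Kq) (n : ℕ) : Subalgebra Kq (TLB ε) :=
  Algebra.adjoin Kq {x | ∃ i ≤ n - 1, x = UD ε i}

/-- The type `B_n` Jones–Wenzl projectors `b_{n,η,ε}` (for `η = ±1`), defined by
`b_{1,η,ε} = (1 + η s₀)/2` and the recursion
`b_{n+1,η,ε} = b_{n,η,ε} + ε (q^{n-1}+q^{-(n-1)})/(q^n+q^{-n}) · b_{n,η,ε} U_n b_{n,η,ε}`. -/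
def bB (ε η : Kq) : ℕ → TLB ε
  | 0 => 1
  | 1 => (2 : Kq)⁻¹ • (1 + η • s0 ε)
  | (n+2) =>
      bB ε η (n+1) +
        (ε * (qq ^ n + qq⁻¹ ^ n) / (qq ^ (n+1) + qq⁻¹ ^ (n+1))) •
          (bB ε η (n+1) * UU ε (n+1) * bB ε η (n+1))

/-- The type `D_n` Jones–Wenzl projector `d_{n,ε} = b_{n,+,ε} + b_{n,-,ε}`. -/
def dD (ε : Kq) (n : ℕ) : TLB ε := bB ε 1 n + bB ε (-1) n

/-! ### Auxiliary material for the proof -/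

section Aux

lemma qq_ne : (qq : Kq) ≠ 0 := RatFunc.X_ne_zero

lemma A_ne (k : ℕ) : (qq ^ k + qq⁻¹ ^ k : Kq) ≠ 0 := by
  have hX : (qq : Kq) ≠ 0 := qq_ne
  have hpoly : (Polynomial.X ^ (2*k) + 1 : Polynomial ℂ) ≠ 0 := by
    rcases Nat.eq_zero_or_pos k with h | h
    · subst h; norm_num
    · have := Polynomial.X_pow_add_C_ne_zero (R := ℂ) (by omega : 0 < 2*k) (1 : ℂ)
      simpa using this
  have h2 : (qq ^ (2*k) + 1 : Kq) ≠ 0 := by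
    have : (qq ^ (2*k) + 1 : Kq) = algebraMap (Polynomial ℂ) Kq (Polynomial.X ^ (2*k) + 1) := by
      simp [qq, RatFunc.algebraMap_X]
    rw [this]
    exact fun h => hpoly (RatFunc.algebraMap_injective ℂ (by simpa using h))
  intro h
  apply h2
  have : (qq:Kq) ^ k * (qq ^ k + qq⁻¹ ^ k) = qq ^ (2*k) + 1 := by
    rw [mul_add, ← pow_add, ← mul_pow, mul_inv_cancel₀ hX, one_pow, two_mul]
  rw [← this, h, mul_zero]

/-- The scalar `q^k + q^{-k}`. -/
def AA (k : ℕ) : Kq := qq ^ k + qq⁻¹ ^ k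
/-- The coefficient in the recursion for `bB (n+2)`. -/
def cc (ε : Kq) (n : ℕ) : Kq := ε * AA n / AA (n+1)
/-- The eigenvalue `e_n` with `U_{n+1} b_{n+1} U_{n+1} = e_n • (b_n U_{n+1})`. -/
def ee (ε : Kq) (n : ℕ) : Kq := -(ε * AA (n+1) / AA n)

lemma AA_ne (k : ℕ) : AA k ≠ 0 := A_ne k

lemma cc_ee (ε : Kq) (hε : ε = 1 ∨ ε = -1) (n : ℕ) : cc ε n * ee ε n = -1 := by
  have h1 := AA_ne n; have h2 := AA_ne (n+1)
  have hε2 : ε * ε = 1 := by rcases hε with h | h <;> rw [h] <;> ring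
  rw [cc, ee]
  field_simp
  linear_combination (-1 : Kq) * hε2

lemma ee_zero (ε : Kq) : ee ε 0 = (2:Kq)⁻¹ * (-(ε * (qq + qq⁻¹))) := by
  rw [ee, AA, AA]
  norm_num
  ring

lemma ee_succ (ε : Kq) (n : ℕ) : ee ε (n+1) = -(ε * (qq + qq⁻¹)) + cc ε n := by
  have hX := qq_ne
  have key : -(ε * AA (n+2)) = (-(ε * (qq + qq⁻¹))) * AA (n+1) + ε * AA n := by
    simp only [AA]; linear_combination ε * (qq ^ n + qq⁻¹ ^ n) * mul_inv_cancel₀ hX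
  calc ee ε (n+1) = (-(ε * AA (n+2))) / AA (n+1) := by rw [ee, ← neg_div]
    _ = ((-(ε * (qq + qq⁻¹))) * AA (n+1) + ε * AA n) / AA (n+1) := by rw [key]
    _ = -(ε * (qq + qq⁻¹)) + cc ε n := by
        rw [add_div, mul_div_cancel_right₀ _ (AA_ne (n+1)), cc]

variable {ε : Kq}

lemma rel {a b : FreeAlgebra Kq (Option ℕ)} (h : TLBRel ε a b) :
    RingQuot.mkAlgHom Kq (TLBRel ε) a = RingQuot.mkAlgHom Kq (TLBRel ε) b :=
  RingQuot.mkAlgHom_rel Kq h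

lemma U_sq (i : ℕ) : UU ε (i+1) * UU ε (i+1) = (-(ε * (qq + qq⁻¹))) • UU ε (i+1) := by
  have := rel (TLBRel.Usq (ε := ε) i)
  rw [map_mul, map_smul] at this
  exact this

lemma U_comm {a b : ℕ} (h : a + 2 ≤ b) :
    UU ε (a+1) * UU ε (b+1) = UU ε (b+1) * UU ε (a+1) := by
  have := rel (TLBRel.Ucomm (ε := ε) a b h)
  rw [map_mul, map_mul] at this
  exact this

lemma U_braid2 (i : ℕ) : UU ε (i+2) * UU ε (i+1) * UU ε (i+2) = UU ε (i+2) := by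
  have := rel (TLBRel.Ubraid2 (ε := ε) i)
  rw [map_mul, map_mul] at this
  exact this

lemma s0_sq : s0 ε * s0 ε = 1 := by
  have := rel (TLBRel.s0sq (ε := ε))
  rw [map_mul, map_one] at this
  exact this

lemma UsU : UU ε 1 * s0 ε * UU ε 1 = 0 := by
  have := rel (TLBRel.UsU (ε := ε))
  rw [map_mul, map_mul, map_zero] at this
  exact this

lemma s0_U_comm (i : ℕ) : s0 ε * UU ε (i+2) = UU ε (i+2) * s0 ε := by
  have := rel (TLBRel.scomm (ε := ε) (i+1) (by omega))
  rw [map_mul, map_mul] at this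
  exact this

lemma reassoc {R : Type*} [Semiring R] {a b c : R} (h : a * b = c) (y : R) :
    a * (b * y) = c * y := by rw [← mul_assoc, h]

lemma reassoc₃ {R : Type*} [Semiring R] {a b c d : R} (h : a * b * c = d) (y : R) :
    a * (b * (c * y)) = d * y := by rw [← mul_assoc, ← mul_assoc, h]

lemma bB_zero (ε η : Kq) : bB ε η 0 = 1 := rfl
lemma bB_one (ε η : Kq) : bB ε η 1 = (2 : Kq)⁻¹ • (1 + η • s0 ε) := rfl
lemma bB_succ (ε η : Kq) (k : ℕ) :
    bB ε η (k+2) = bB ε η (k+1) +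
      cc ε k • (bB ε η (k+1) * UU ε (k+1) * bB ε η (k+1)) := rfl

lemma two_ne : (2:Kq) ≠ 0 := by
  intro h
  have h2 : algebraMap (Polynomial ℂ) Kq 2 = algebraMap (Polynomial ℂ) Kq 0 := by
    rw [map_ofNat, map_zero]; exact h
  have := RatFunc.algebraMap_injective ℂ h2
  norm_num at this

lemma two_inv_two : ((2:Kq)⁻¹ * 2 : Kq) = 1 := inv_mul_cancel₀ two_ne

/-- `U_{j+1}` commutes with `bB n` for `n ≤ j`. -/
lemma b_comm (η : Kq) : ∀ n j : ℕ, n ≤ j → Commute (UU ε (j+1)) (bB ε η n)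
  | 0, j, _ => by rw [bB_zero]; exact Commute.one_right _
  | 1, j, h => by
      obtain ⟨i, rfl⟩ : ∃ i, j = i + 1 := ⟨j - 1, by omega⟩
      have hs : Commute (UU ε (i+2)) (s0 ε) := (s0_U_comm i).symm
      rw [bB_one]
      exact ((Commute.one_right _).add_right (hs.smul_right η)).smul_right _
  | (n+2), j, h => by
      have IH : Commute (UU ε (j+1)) (bB ε η (n+1)) := b_comm η (n+1) j (by omega)
      have hU : Commute (UU ε (j+1)) (UU ε (n+1)) := (U_comm (by omega : n + 2 ≤ j)).symm
      rw [bB_succ]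
      exact IH.add_right (((IH.mul_right hU).mul_right IH).smul_right _)

/-- Right absorption: anything killed by the `U_i` and with `s₀`-eigenvalue `η`
absorbs `bB M` on the right. -/
lemma absorb (ε η : Kq) (hη2 : η * η = 1) :
    ∀ (M : ℕ) (X : TLB ε), X * s0 ε = η • X →
      (∀ i, 1 ≤ i → i + 1 ≤ M → X * UU ε i = 0) → X * bB ε η M = X
  | 0, X, _, _ => by rw [bB_zero, mul_one]
  | 1, X, hs, _ => by
      rw [bB_one]
      simp only [mul_smul_comm, mul_add, mul_one, hs, smul_smul, hη2, one_smul]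
      rw [← two_smul Kq X, smul_smul, two_inv_two, one_smul]
  | (M+2), X, hs, hU => by
      have IH := absorb ε η hη2 (M+1) X hs (fun i h1 h2 => hU i h1 (by omega))
      rw [bB_succ]
      simp only [mul_add, mul_smul_comm, ← mul_assoc]
      rw [IH, hU (M+1) (by omega) (by omega), zero_mul, smul_zero, add_zero]

/-- Left absorption. -/
lemma absorb' (ε η : Kq) (hη2 : η * η = 1) :
    ∀ (M : ℕ) (X : TLB ε), s0 ε * X = η • X →
      (∀ i, 1 ≤ i → i + 1 ≤ M → UU ε i * X = 0) → bB ε η M * X = X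
  | 0, X, _, _ => by rw [bB_zero, one_mul]
  | 1, X, hs, _ => by
      rw [bB_one]
      simp only [smul_mul_assoc, add_mul, one_mul, hs, smul_smul, hη2, one_smul]
      rw [← two_smul Kq X, smul_smul, two_inv_two, one_smul]
  | (M+2), X, hs, hU => by
      have IH := absorb' ε η hη2 (M+1) X hs (fun i h1 h2 => hU i h1 (by omega))
      rw [bB_succ]
      simp only [add_mul, smul_mul_assoc, mul_assoc]
      rw [IH, hU (M+1) (by omega) (by omega), mul_zero, smul_zero, add_zero]

lemma main (ε η : Kq) (hε : ε = 1 ∨ ε = -1) (hη : η = 1 ∨ η = -1) :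
    ∀ k : ℕ,
      (bB ε η (k+1) * bB ε η (k+1) = bB ε η (k+1)) ∧
      (∀ i, 1 ≤ i → i + 1 ≤ k+1 → bB ε η (k+1) * UU ε i = 0 ∧ UU ε i * bB ε η (k+1) = 0) ∧
      (bB ε η (k+1) * s0 ε = η • bB ε η (k+1) ∧ s0 ε * bB ε η (k+1) = η • bB ε η (k+1)) ∧
      (UU ε (k+1) * bB ε η (k+1) * UU ε (k+1) = ee ε k • (bB ε η k * UU ε (k+1))) := by
  have hη2 : η * η = 1 := by rcases hη with h | h <;> rw [h] <;> ring
  intro k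
  induction k with
  | zero =>
      simp only [Nat.zero_add]
      have hA : (1 + η • s0 ε) * (1 + η • s0 ε) = (2:Kq) • (1 + η • s0 ε) := by
        rw [mul_add, mul_one, add_mul, one_mul, smul_mul_assoc, mul_smul_comm, smul_smul,
          hη2, one_smul, s0_sq, two_smul]
        abel
      have hAs : (1 + η • s0 ε) * s0 ε = η • (1 + η • s0 ε) := by
        rw [add_mul, one_mul, smul_mul_assoc, s0_sq, smul_add, smul_smul, hη2, one_smul]
        abel
      have hsA : s0 ε * (1 + η • s0 ε) = η • (1 + η • s0 ε) := by
        rw [mul_add, mul_one, mul_smul_comm, s0_sq, smul_add, smul_smul, hη2, one_smul]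
        abel
      refine ⟨?_, ?_, ⟨?_, ?_⟩, ?_⟩
      · rw [bB_one, smul_mul_assoc, mul_smul_comm, smul_smul, hA, smul_smul]
        rw [show (2:Kq)⁻¹ * (2:Kq)⁻¹ * 2 = (2:Kq)⁻¹ by rw [mul_assoc, two_inv_two, mul_one]]
      · intro i h1 h2
        exact absurd h2 (by omega)
      · rw [bB_one, smul_mul_assoc, hAs, smul_comm]
      · rw [bB_one, mul_smul_comm, hsA, smul_comm]
      · rw [bB_zero, one_mul, bB_one, ee_zero]
        have hUsq1 : UU ε 1 * UU ε 1 = (-(ε * (qq + qq⁻¹))) • UU ε 1 := U_sq 0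
        have h3 : UU ε 1 * (1 + η • s0 ε) * UU ε 1 = (-(ε * (qq + qq⁻¹))) • UU ε 1 := by
          rw [mul_add, mul_one, add_mul, mul_smul_comm, smul_mul_assoc, UsU, smul_zero,
            add_zero, hUsq1]
        rw [mul_smul_comm, smul_mul_assoc, h3, smul_smul]
  | succ k IH =>
      obtain ⟨hidem, hUz, ⟨hs1, hs2⟩, hE⟩ := IH
      have hce : cc ε k * ee ε k = -1 := cc_ee ε hε k
      have habs : bB ε η (k+1) * bB ε η k = bB ε η (k+1) :=
        absorb ε η hη2 k _ hs1 (fun i h1 h2 => (hUz i h1 (by omega)).1)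
      have habs' : bB ε η k * bB ε η (k+1) = bB ε η (k+1) :=
        absorb' ε η hη2 k _ hs2 (fun i h1 h2 => (hUz i h1 (by omega)).2)
      have hcomm : Commute (UU ε (k+1)) (bB ε η k) := b_comm η k k le_rfl
      have hE' : UU ε (k+1) * bB ε η (k+1) * UU ε (k+1)
          = ee ε k • (UU ε (k+1) * bB ε η k) := by rw [hE, hcomm.eq]
      have hc' : Commute (UU ε (k+2)) (bB ε η (k+1)) := b_comm η (k+1) (k+1) le_rfl
      refine ⟨?_, ?_, ⟨?_, ?_⟩, ?_⟩
      · -- idempotency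
        show bB ε η (k+2) * bB ε η (k+2) = bB ε η (k+2)
        rw [bB_succ]
        have hx1 : bB ε η (k+1) * (bB ε η (k+1) * UU ε (k+1) * bB ε η (k+1))
            = bB ε η (k+1) * UU ε (k+1) * bB ε η (k+1) := by
          rw [← mul_assoc, ← mul_assoc, hidem]
        have hx2 : (bB ε η (k+1) * UU ε (k+1) * bB ε η (k+1)) * bB ε η (k+1)
            = bB ε η (k+1) * UU ε (k+1) * bB ε η (k+1) := by
          rw [mul_assoc, hidem]
        have hx3 : (bB ε η (k+1) * UU ε (k+1) * bB ε η (k+1))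
              * (bB ε η (k+1) * UU ε (k+1) * bB ε η (k+1))
            = ee ε k • (bB ε η (k+1) * UU ε (k+1) * bB ε η (k+1)) := by
          calc (bB ε η (k+1) * UU ε (k+1) * bB ε η (k+1))
                * (bB ε η (k+1) * UU ε (k+1) * bB ε η (k+1))
              = bB ε η (k+1) * UU ε (k+1) * (bB ε η (k+1) * bB ε η (k+1))
                  * UU ε (k+1) * bB ε η (k+1) := by simp only [mul_assoc]
            _ = bB ε η (k+1) * UU ε (k+1) * bB ε η (k+1) * UU ε (k+1) * bB ε η (k+1) := by
                rw [hidem]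
            _ = bB ε η (k+1) * (UU ε (k+1) * bB ε η (k+1) * UU ε (k+1)) * bB ε η (k+1) := by
                simp only [mul_assoc]
            _ = bB ε η (k+1) * (ee ε k • (bB ε η k * UU ε (k+1))) * bB ε η (k+1) := by
                rw [hE]
            _ = ee ε k • (bB ε η (k+1) * bB ε η k * (UU ε (k+1) * bB ε η (k+1))) := by
                simp only [mul_smul_comm, smul_mul_assoc, mul_assoc]
            _ = ee ε k • (bB ε η (k+1) * UU ε (k+1) * bB ε η (k+1)) := by
                rw [habs, ← mul_assoc]
        calc (bB ε η (k+1) + cc ε k • (bB ε η (k+1) * UU ε (k+1) * bB ε η (k+1)))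
              * (bB ε η (k+1) + cc ε k • (bB ε η (k+1) * UU ε (k+1) * bB ε η (k+1)))
            = (bB ε η (k+1) * bB ε η (k+1)
                + bB ε η (k+1) * (cc ε k • (bB ε η (k+1) * UU ε (k+1) * bB ε η (k+1))))
              + ((cc ε k • (bB ε η (k+1) * UU ε (k+1) * bB ε η (k+1))) * bB ε η (k+1)
                + (cc ε k • (bB ε η (k+1) * UU ε (k+1) * bB ε η (k+1)))
                    * (cc ε k • (bB ε η (k+1) * UU ε (k+1) * bB ε η (k+1)))) := by
              rw [add_mul, mul_add, mul_add]
          _ = (bB ε η (k+1) + cc ε k • (bB ε η (k+1) * UU ε (k+1) * bB ε η (k+1)))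
              + (cc ε k • (bB ε η (k+1) * UU ε (k+1) * bB ε η (k+1))
                + (cc ε k * cc ε k * ee ε k) • (bB ε η (k+1) * UU ε (k+1) * bB ε η (k+1))) := by
              rw [hidem, mul_smul_comm, hx1, smul_mul_assoc, hx2, smul_mul_assoc,
                mul_smul_comm, smul_smul, hx3, smul_smul]
          _ = bB ε η (k+1) + cc ε k • (bB ε η (k+1) * UU ε (k+1) * bB ε η (k+1)) := by
              rw [← add_smul, show cc ε k + cc ε k * cc ε k * ee ε k = 0 from by
                linear_combination cc ε k * hce, zero_smul, add_zero]
      · -- killing the U_i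
        intro i h1 h2
        rcases Nat.lt_or_ge i (k+1) with hik | hik
        · have z1 := (hUz i h1 (by omega)).1
          have z2 := (hUz i h1 (by omega)).2
          constructor
          · show bB ε η (k+2) * UU ε i = 0
            rw [bB_succ]
            simp only [add_mul, smul_mul_assoc, mul_assoc, z1, mul_zero, smul_zero,
              add_zero, zero_add]
          · show UU ε i * bB ε η (k+2) = 0
            rw [bB_succ]
            simp only [mul_add, mul_smul_comm, mul_assoc, reassoc z2, z2, zero_mul,
              mul_zero, smul_zero, add_zero, zero_add]
        · obtain rfl : i = k+1 := by omega
          constructor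
          · show bB ε η (k+2) * UU ε (k+1) = 0
            rw [bB_succ]
            have hE1 : UU ε (k+1) * (bB ε η (k+1) * UU ε (k+1))
                = ee ε k • (bB ε η k * UU ε (k+1)) := by rw [← mul_assoc]; exact hE
            simp only [add_mul, smul_mul_assoc, mul_assoc, hE1, mul_smul_comm, smul_smul,
              reassoc habs]
            rw [hce]
            simp
          · show UU ε (k+1) * bB ε η (k+2) = 0
            rw [bB_succ]
            simp only [mul_add, mul_smul_comm, mul_assoc, reassoc₃ hE', smul_mul_assoc,
              smul_smul, habs']
            rw [hce]
            simp
      · -- s0 on the right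
        show bB ε η (k+2) * s0 ε = η • bB ε η (k+2)
        rw [bB_succ]
        have hxs : bB ε η (k+1) * UU ε (k+1) * bB ε η (k+1) * s0 ε
            = η • (bB ε η (k+1) * UU ε (k+1) * bB ε η (k+1)) := by
          rw [mul_assoc (bB ε η (k+1) * UU ε (k+1)) (bB ε η (k+1)) (s0 ε), hs1, mul_smul_comm]
        rw [add_mul, smul_mul_assoc, hs1, hxs, smul_add, smul_comm]
      · -- s0 on the left
        show s0 ε * bB ε η (k+2) = η • bB ε η (k+2)
        rw [bB_succ]
        have hsx : s0 ε * (bB ε η (k+1) * UU ε (k+1) * bB ε η (k+1))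
            = η • (bB ε η (k+1) * UU ε (k+1) * bB ε η (k+1)) := by
          rw [← mul_assoc, ← mul_assoc, hs2, smul_mul_assoc, smul_mul_assoc]
        rw [mul_add, mul_smul_comm, hs2, hsx, smul_add, smul_comm]
      · -- the eigenvalue relation one level up
        show UU ε (k+2) * bB ε η (k+2) * UU ε (k+2)
            = ee ε (k+1) • (bB ε η (k+1) * UU ε (k+2))
        rw [bB_succ]
        have hsqW : UU ε (k+2) * UU ε (k+2) = (-(ε * (qq + qq⁻¹))) • UU ε (k+2) := U_sq (k+1)
        have t1 : UU ε (k+2) * (bB ε η (k+1) * UU ε (k+2))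
            = (-(ε * (qq + qq⁻¹))) • (bB ε η (k+1) * UU ε (k+2)) := by
          rw [← mul_assoc, hc'.eq, mul_assoc, hsqW, mul_smul_comm]
        have hbU : ∀ y, UU ε (k+2) * (bB ε η (k+1) * y) = bB ε η (k+1) * (UU ε (k+2) * y) :=
          fun y => by rw [← mul_assoc, hc'.eq, mul_assoc]
        have hbr : ∀ y, UU ε (k+2) * (UU ε (k+1) * (UU ε (k+2) * y)) = UU ε (k+2) * y :=
          reassoc₃ (U_braid2 k)
        have t2 : UU ε (k+2) * (bB ε η (k+1) * (UU ε (k+1) * (bB ε η (k+1) * UU ε (k+2))))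
            = bB ε η (k+1) * UU ε (k+2) := by
          rw [hbU, ← hc'.eq, hbr, hc'.eq, reassoc hidem]
        calc UU ε (k+2) * (bB ε η (k+1) + cc ε k • (bB ε η (k+1) * UU ε (k+1) * bB ε η (k+1)))
              * UU ε (k+2)
            = UU ε (k+2) * (bB ε η (k+1) * UU ε (k+2))
              + cc ε k • (UU ε (k+2)
                  * (bB ε η (k+1) * (UU ε (k+1) * (bB ε η (k+1) * UU ε (k+2))))) := by
              simp only [mul_add, add_mul, mul_smul_comm, smul_mul_assoc, mul_assoc]
          _ = (-(ε * (qq + qq⁻¹))) • (bB ε η (k+1) * UU ε (k+2))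
              + cc ε k • (bB ε η (k+1) * UU ε (k+2)) := by rw [t1, t2]
          _ = ee ε (k+1) • (bB ε η (k+1) * UU ε (k+2)) := by rw [ee_succ, add_smul]

theorem box_absorb (ε η : Kq) (hε : ε = 1 ∨ ε = -1) (hη : η = 1 ∨ η = -1)
    (n m : ℕ) (hm : 1 ≤ m) (hmn : m ≤ n) :
    bB ε η n * bB ε η m = bB ε η n ∧ bB ε η m * bB ε η n = bB ε η n := by
  have hη2 : η * η = 1 := by rcases hη with h | h <;> rw [h] <;> ring
  obtain ⟨N, rfl⟩ : ∃ N, n = N + 1 := ⟨n - 1, by omega⟩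
  obtain ⟨_, hUz, ⟨hs1, hs2⟩, _⟩ := main ε η hε hη N
  constructor
  · exact absorb ε η hη2 m _ hs1 (fun i h1 h2 => (hUz i h1 (by omega)).1)
  · exact absorb' ε η hη2 m _ hs2 (fun i h1 h2 => (hUz i h1 (by omega)).2)

end Aux

theorem stmt12 (ε η : Kq) (hε : ε = 1 ∨ ε = -1) (hη : η = 1 ∨ η = -1)
    (n m : ℕ) (hm : 1 ≤ m) (hmn : m ≤ n) :
    bB ε η n * bB ε η m = bB ε η n ∧ bB ε η m * bB ε η n = bB ε η n := by
  exact box_absorb ε η hε hη n m hm hmn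

end
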